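/- Let R ⊆ (Fin r → Bool) be a mergeable Boolean relation, let C ⊆ Fin r and let P be the complement of C in Fin r. Then the zero-closure on the petal positions of the sunflower restriction, Δ_P(∇_C(R)), is mergeable. -/
import Mathlib


/-- The merge operation applies to tuples `α β γ δ` if `α ∧ δ ≤ β ≤ α` and
`β ∧ γ ≤ δ ≤ γ` (pointwise, on Boolean tuples). -/
def MergeApplies {r : ℕ} (α β γ δ : Fin r → Bool) : Prop :=
  (∀ i, (α i && δ i) ≤ β i) ∧ (∀ i, β i ≤ α i) ∧
    (∀ i, (β i && γ i) ≤ δ i) ∧ (∀ i, δ i ≤ γ i)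

/-- A Boolean relation is mergeable if it is closed under the merge operation. -/
def Mergeable {r : ℕ} (R : Set (Fin r → Bool)) : Prop :=
  ∀ α ∈ R, ∀ β ∈ R, ∀ γ ∈ R, ∀ δ ∈ R,
    MergeApplies α β γ δ → (fun i => α i && (β i || γ i)) ∈ R

/-- Sunflower restriction of `R` with core `C`: tuples of `R` that remain in `R`
when all positions outside `C` are set to false. -/
def nablaC {r : ℕ} (C : Finset (Fin r)) (R : Set (Fin r → Bool)) :
    Set (Fin r → Bool) :=
  {t | t ∈ R ∧ (fun i => if i ∈ C then t i else false) ∈ R}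

/-- Zero-closure of `S` on positions `P`. -/
def deltaP {r : ℕ} (P : Finset (Fin r)) (S : Set (Fin r → Bool)) :
    Set (Fin r → Bool) :=
  {t | ∃ s ∈ S, (∀ i ∉ P, t i = s i) ∧ ∀ i ∈ P, t i ≤ s i}

theorem stmt_9 {r : ℕ} (R : Set (Fin r → Bool)) (hR : Mergeable R)
    (C : Finset (Fin r)) :
    Mergeable (deltaP Cᶜ (nablaC C R)) := by
  intro α hα β hβ γ hγ δ hδ hM
  obtain ⟨h1, h2, h3, h4⟩ := hM
  obtain ⟨a, ⟨haR, ha0⟩, haC, haP⟩ := hα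
  obtain ⟨b, ⟨hbR, hb0⟩, hbC, hbP⟩ := hβ
  obtain ⟨c, ⟨hcR, hc0⟩, hcC, hcP⟩ := hγ
  obtain ⟨d, ⟨hdR, hd0⟩, hdC, hdP⟩ := hδ
  have hmem : ∀ i : Fin r, i ∈ C → i ∉ (Cᶜ : Finset (Fin r)) := by
    intro i hi; simp [hi]
  have eα : ∀ i ∈ C, α i = a i := fun i hi => haC i (hmem i hi)
  have eβ : ∀ i ∈ C, β i = b i := fun i hi => hbC i (hmem i hi)
  have eγ : ∀ i ∈ C, γ i = c i := fun i hi => hcC i (hmem i hi)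
  have eδ : ∀ i ∈ C, δ i = d i := fun i hi => hdC i (hmem i hi)
  have hba : ∀ i ∈ C, b i ≤ a i := fun i hi => by
    have := h2 i; rwa [eα i hi, eβ i hi] at this
  have hdc : ∀ i ∈ C, d i ≤ c i := fun i hi => by
    have := h4 i; rwa [eγ i hi, eδ i hi] at this
  have hbcd : ∀ i ∈ C, (b i && c i) ≤ d i := fun i hi => by
    have := h3 i; rwa [eβ i hi, eγ i hi, eδ i hi] at this
  have hadb : ∀ i ∈ C, (a i && d i) ≤ b i := fun i hi => by
    have := h1 i; rwa [eα i hi, eδ i hi, eβ i hi] at this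
  -- m1 = a ∧ (b0 ∨ b)
  have m1 : (fun i => a i && ((if i ∈ C then b i else false) || b i)) ∈ R := by
    refine hR a haR _ hb0 b hbR _ hb0 ⟨?_, ?_, ?_, ?_⟩
    · intro i; by_cases hi : i ∈ C
      · simp only [if_pos hi]; exact Bool.and_le_right _ _
      · simp only [if_neg hi]; cases a i <;> decide
    · intro i; by_cases hi : i ∈ C
      · simp only [if_pos hi]; exact hba i hi
      · simp only [if_neg hi]; exact Bool.false_le _
    · intro i; by_cases hi : i ∈ C
      · simp only [if_pos hi]; exact Bool.and_le_left _ _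
      · simp only [if_neg hi]; cases b i <;> decide
    · intro i; by_cases hi : i ∈ C
      · simp only [if_pos hi]; exact le_refl _
      · simp only [if_neg hi]; exact Bool.false_le _
  -- m2 = c ∧ (d0 ∨ m1)
  have m2 : (fun i => c i && ((if i ∈ C then d i else false)
      || (a i && ((if i ∈ C then b i else false) || b i)))) ∈ R := by
    refine hR c hcR _ hd0 _ m1 _ hb0 ⟨?_, ?_, ?_, ?_⟩
    · intro i; by_cases hi : i ∈ C
      · simp only [if_pos hi]
        have := hbcd i hi
        revert this; cases b i <;> cases c i <;> cases d i <;> decide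
      · simp only [if_neg hi]; cases c i <;> decide
    · intro i; by_cases hi : i ∈ C
      · simp only [if_pos hi]; exact hdc i hi
      · simp only [if_neg hi]; exact Bool.false_le _
    · intro i; by_cases hi : i ∈ C
      · simp only [if_pos hi]; cases a i <;> cases b i <;> cases d i <;> decide
      · simp only [if_neg hi]; exact Bool.false_le _
    · intro i; by_cases hi : i ∈ C
      · simp only [if_pos hi]
        have := hba i hi
        revert this; cases a i <;> cases b i <;> decide
      · simp only [if_neg hi]; exact Bool.false_le _
  -- m3 = a ∧ (m1 ∨ c)
  have m3 : (fun i => a i && ((a i && ((if i ∈ C then b i else false) || b i))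
      || c i)) ∈ R := by
    refine hR a haR _ m1 c hcR _ m2 ⟨?_, ?_, ?_, ?_⟩
    · intro i; by_cases hi : i ∈ C
      · simp only [if_pos hi]
        have := hadb i hi
        revert this
        cases a i <;> cases b i <;> cases c i <;> cases d i <;> decide
      · simp only [if_neg hi]
        cases a i <;> cases b i <;> cases c i <;> decide
    · intro i; exact Bool.and_le_left _ _
    · intro i; by_cases hi : i ∈ C
      · simp only [if_pos hi]
        cases a i <;> cases b i <;> cases c i <;> cases d i <;> decide
      · simp only [if_neg hi]
        cases a i <;> cases b i <;> cases c i <;> decide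
    · intro i; exact Bool.and_le_left _ _
  -- m4 = a0 ∧ (b0 ∨ c0)
  have m4 : (fun i => (if i ∈ C then a i else false)
      && ((if i ∈ C then b i else false) || (if i ∈ C then c i else false))) ∈ R := by
    refine hR _ ha0 _ hb0 _ hc0 _ hd0 ⟨?_, ?_, ?_, ?_⟩
    · intro i; by_cases hi : i ∈ C
      · simp only [if_pos hi]; exact hadb i hi
      · simp only [if_neg hi]; decide
    · intro i; by_cases hi : i ∈ C
      · simp only [if_pos hi]; exact hba i hi
      · simp only [if_neg hi]; exact le_refl _
    · intro i; by_cases hi : i ∈ C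
      · simp only [if_pos hi]; exact hbcd i hi
      · simp only [if_neg hi]; decide
    · intro i; by_cases hi : i ∈ C
      · simp only [if_pos hi]; exact hdc i hi
      · simp only [if_neg hi]; exact le_refl _
  refine ⟨fun i => a i && ((a i && ((if i ∈ C then b i else false) || b i)) || c i),
    ⟨m3, ?_⟩, ?_, ?_⟩
  · convert m4 using 1
    funext i
    by_cases hi : i ∈ C
    · simp only [if_pos hi]
      cases a i <;> cases b i <;> cases c i <;> decide
    · simp only [if_neg hi]
      decide
  · intro i hi
    have hiC : i ∈ C := by simpa using hi
    dsimp only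
    rw [eα i hiC, eβ i hiC, eγ i hiC]
    simp only [if_pos hiC]
    cases a i <;> cases b i <;> cases c i <;> decide
  · intro i hi
    have hiC : i ∉ C := by simpa using hi
    have h1' := haP i hi
    have h2' := hbP i hi
    have h3' := hcP i hi
    dsimp only
    simp only [if_neg hiC]
    revert h1' h2' h3'
    cases α i <;> cases a i <;> cases β i <;> cases b i <;>
      cases γ i <;> cases c i <;> decide
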